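/- Let k be a field of characteristic p > 0. Consider the blow-up chart map b* : k[x₁, …, xₙ] → k[u₁, …, uₙ] given by x₁ ↦ u₁, xᵢ ↦ u₁·uᵢ for 2 ≤ i ≤ n. Then for every polynomial f ∈ k[x₁,…,xₙ], applying the derivation ∂ = Σᵢ xᵢ²·∂/∂xᵢ and then b* equals applying b* and then u₁·ψ, where ψ = u₁·∂/∂u₁ + Σ_{i=2}^{n}(−uᵢ + uᵢ²)·∂/∂uᵢ. That is, b*(∂(f)) = u₁·ψ(b*(f)). -/

import Mathlib

open MvPolynomial

private lemma aux_pderiv_X {k : Type*} [Field k] {m : ℕ} (i j : Fin m) :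
    (pderiv i (X j) : MvPolynomial (Fin m) k) = if i = j then 1 else 0 := by
  rw [pderiv_X]; split <;> simp_all [Pi.single_apply]

private lemma aux_leibniz {k : Type*} [Field k] {m : ℕ}
    (c : Fin m → MvPolynomial (Fin m) k) (p q : MvPolynomial (Fin m) k) :
    ∑ i, c i * pderiv i (p * q)
      = (∑ i, c i * pderiv i p) * q + p * ∑ i, c i * pderiv i q := by
  rw [Finset.sum_mul, Finset.mul_sum, ← Finset.sum_add_distrib]
  exact Finset.sum_congr rfl fun i _ => by rw [pderiv_mul]; ring

theorem statement6 {k : Type*} [Field k] (n : ℕ)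
    (f : MvPolynomial (Fin (n + 2)) k) :
    aeval (fun i : Fin (n + 2) =>
        if i = 0 then (X 0 : MvPolynomial (Fin (n + 2)) k) else X 0 * X i)
      (∑ i, X i ^ 2 * pderiv i f)
    = X 0 * ∑ i, (if i = 0 then X i else -X i + X i ^ 2) *
        pderiv i (aeval (fun i : Fin (n + 2) =>
          if i = 0 then (X 0 : MvPolynomial (Fin (n + 2)) k) else X 0 * X i) f) := by
  set g : Fin (n + 2) → MvPolynomial (Fin (n + 2)) k :=
    fun i => if i = 0 then X 0 else X 0 * X i with hg
  set c : Fin (n + 2) → MvPolynomial (Fin (n + 2)) k :=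
    fun i => if i = 0 then X i else -X i + X i ^ 2 with hc
  have key : ∀ j : Fin (n + 2), X 0 * ∑ i, c i * pderiv i (g j) = g j ^ 2 := by
    intro j
    have hsum : ∀ j : Fin (n + 2), (∑ i, c i * pderiv i (X j)) = c j := by
      intro j
      rw [Finset.sum_eq_single j]
      · rw [pderiv_X_self, mul_one]
      · intro i _ hij; rw [aux_pderiv_X, if_neg hij, mul_zero]
      · simp
    by_cases hj : j = 0
    · subst hj
      simp only [hg, if_pos rfl, hsum]
      simp only [hc, if_pos rfl]
      ring
    · simp only [hg, hc, if_neg hj]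
      rw [aux_leibniz, hsum, hsum, hc]
      simp only [if_pos rfl, if_neg hj, eq_self_iff_true, if_true]
      ring
  induction f using MvPolynomial.induction_on with
  | C a => simp
  | add p q hp hq =>
      simp only [map_add, mul_add, Finset.sum_add_distrib] at *
      rw [hp, hq]
  | mul_X p j ih =>
      have hL : (∑ i, X i ^ 2 * pderiv i (p * X j))
          = (∑ i, X i ^ 2 * pderiv i p) * X j + p * (X j) ^ 2 := by
        rw [aux_leibniz (fun i => X i ^ 2) p (X j)]
        congr 1
        rw [Finset.sum_eq_single j]
        · rw [pderiv_X_self, mul_one, sq]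
        · intro i _ hij; rw [aux_pderiv_X, if_neg hij, mul_zero]
        · simp
      have hR : aeval g (p * X j) = aeval g p * g j := by simp
      rw [hL, map_add, map_mul, map_mul, hR, aux_leibniz c (aeval g p) (g j),
        mul_add, ← mul_assoc, ih]
      have hXj : aeval g (X j : MvPolynomial (Fin (n + 2)) k) = g j := by simp
      rw [map_pow, hXj]
      calc (X 0 * ∑ i, c i * pderiv i (aeval g p)) * g j + aeval g p * g j ^ 2
          = (X 0 * ∑ i, c i * pderiv i (aeval g p)) * g j
            + aeval g p * (X 0 * ∑ i, c i * pderiv i (g j)) := by rw [key j]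
        _ = _ := by ring
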